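/- Let 𝒢=(𝒱,ℰ) be a quasi-strongly connected directed graph and let {G_ij}_{(i,j)∈ℰ} be a collection of matrices with G_ijᵀ·G_ij = I_d for all (i,j)∈ℰ. Then every eigenvalue of Z(𝒢,{G_ij}) that lies on the imaginary axis (has zero real part) is equal to zero. -/

import Mathlib

open Matrix Kronecker

/-- An edge-indexed collection `G` of invertible matrices is *transitively consistent*
for the graph with vertex set `Fin n` and edge set `E` if it extends to a collection
indexed by all ordered pairs that is transitively consistent for the complete graph. -/
def TransConsistent (n d : ℕ) (E : Finset (Fin n × Fin n))
    (G : Fin n → Fin n → Matrix (Fin d) (Fin d) ℝ) : Prop :=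
  ∃ Gc : Fin n → Fin n → Matrix (Fin d) (Fin d) ℝ,
    (∀ i j, IsUnit (Gc i j)) ∧
    (∀ i j k, Gc i k = Gc i j * Gc j k) ∧
    (∀ i j, (i, j) ∈ E → Gc i j = G i j)

/-- The graph is connected: any two nodes are joined by an undirected path. -/
def UConnected (n : ℕ) (E : Finset (Fin n × Fin n)) : Prop :=
  ∀ i j : Fin n, Relation.ReflTransGen (fun a b => (a, b) ∈ E ∨ (b, a) ∈ E) i j

/-- The graph is quasi-strongly connected: it has a center, i.e. a node reachable
from every node by a directed path. -/
def QSC (n : ℕ) (E : Finset (Fin n × Fin n)) : Prop :=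
  ∃ c : Fin n, ∀ i : Fin n, Relation.ReflTransGen (fun a b => (a, b) ∈ E) i c

/-- The `Z`-matrix: the `(i,i)` block is `|N_i| • I_d`; for `i ≠ j` the `(i,j)` block is
`-G i j` if `(i,j)` is an edge and `0` otherwise. -/
def Zmat (n d : ℕ) (E : Finset (Fin n × Fin n))
    (G : Fin n → Fin n → Matrix (Fin d) (Fin d) ℝ) :
    Matrix (Fin n × Fin d) (Fin n × Fin d) ℝ :=
  fun p q =>
    if p.1 = q.1 then
      ((E.filter fun e => e.1 = p.1).card : ℝ) * (if p.2 = q.2 then 1 else 0)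
    else if (p.1, q.1) ∈ E then -G p.1 q.1 p.2 q.2 else 0

/-- The `H`-matrix: the `(i,i)` block is `|N_i| • I_d + ∑_{k : (k,i) ∈ E} (G k i)ᵀ * G k i`;
for `i ≠ j` the `(i,j)` block is `-[(i,j) ∈ E] • G i j - [(j,i) ∈ E] • (G j i)ᵀ`. -/
def Hmat (n d : ℕ) (E : Finset (Fin n × Fin n))
    (G : Fin n → Fin n → Matrix (Fin d) (Fin d) ℝ) :
    Matrix (Fin n × Fin d) (Fin n × Fin d) ℝ :=
  fun p q =>
    if p.1 = q.1 then
      ((E.filter fun e => e.1 = p.1).card : ℝ) * (if p.2 = q.2 then 1 else 0)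
        + ∑ k : Fin n, (if (k, p.1) ∈ E then ((G k p.1)ᵀ * G k p.1) p.2 q.2 else 0)
    else
      (if (p.1, q.1) ∈ E then -G p.1 q.1 p.2 q.2 else 0)
        + (if (q.1, p.1) ∈ E then -(G q.1 p.1)ᵀ p.2 q.2 else 0)

/-- Adjacency matrix of the graph. -/
def adjMat (n : ℕ) (E : Finset (Fin n × Fin n)) : Matrix (Fin n) (Fin n) ℝ :=
  fun i j => if (i, j) ∈ E then 1 else 0

/-- Graph Laplacian `L = diag(A·1) - A`. -/
def lapMat (n : ℕ) (E : Finset (Fin n × Fin n)) : Matrix (Fin n) (Fin n) ℝ :=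
  Matrix.diagonal (fun i => ∑ j, adjMat n E i j) - adjMat n E

/-- Block diagonal matrix `diag(G 1, …, G n)` with `d × d` blocks. -/
def blkDiag (n d : ℕ) (G : Fin n → Matrix (Fin d) (Fin d) ℝ) :
    Matrix (Fin n × Fin d) (Fin n × Fin d) ℝ :=
  fun p q => if p.1 = q.1 then G p.1 p.2 q.2 else 0

/-- `U₁({G_i})`: the block column matrix stacking `(G 1)⁻ᵀ, …, (G n)⁻ᵀ`. -/
noncomputable def U1 (n d : ℕ) (G : Fin n → Matrix (Fin d) (Fin d) ℝ) :
    Matrix (Fin n × Fin d) (Fin d) ℝ :=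
  fun p c => ((G p.1)⁻¹)ᵀ p.2 c

/-- The `i`-th `d × d` block of a block column matrix `X ∈ ℝ^{nd × d}`. -/
def blk (n d : ℕ) (X : Matrix (Fin n × Fin d) (Fin d) ℝ) (i : Fin n) :
    Matrix (Fin d) (Fin d) ℝ :=
  fun a b => X (i, a) b

/-- Frobenius norm of a real matrix. -/
noncomputable def frob {m k : Type*} [Fintype m] [Fintype k] (M : Matrix m k ℝ) : ℝ :=
  Real.sqrt (∑ i, ∑ j, (M i j) ^ 2)

/-- Squared Frobenius norm of a real matrix. -/
def frobSq {m k : Type*} [Fintype m] [Fintype k] (M : Matrix m k ℝ) : ℝ :=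
  ∑ i, ∑ j, (M i j) ^ 2

/-- Euclidean norm on `ℝ^m`. -/
noncomputable def euclNorm {m : Type*} [Fintype m] (x : m → ℝ) : ℝ :=
  Real.sqrt (∑ i, (x i) ^ 2)


private lemma sum_conj_mul_self {d : ℕ} (x : Fin d → ℂ) :
    ∑ a, (starRingEnd ℂ) (x a) * x a = ((∑ a, Complex.normSq (x a) : ℝ) : ℂ) := by
  push_cast
  refine Finset.sum_congr rfl fun a _ => ?_
  rw [mul_comm, Complex.mul_conj]

private lemma normSq_sub_sum {d : ℕ} (x y : Fin d → ℂ) :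
    ∑ a, Complex.normSq (x a - y a)
      = ∑ a, Complex.normSq (x a) + ∑ a, Complex.normSq (y a)
        - 2 * (∑ a, (starRingEnd ℂ) (x a) * y a).re := by
  rw [Complex.re_sum, Finset.mul_sum, ← Finset.sum_add_distrib, ← Finset.sum_sub_distrib]
  refine Finset.sum_congr rfl fun a _ => ?_
  simp only [Complex.normSq_apply, Complex.mul_re, Complex.sub_re, Complex.sub_im,
    Complex.conj_re, Complex.conj_im]
  ring

private lemma normSq_mulVec {d : ℕ} (M : Matrix (Fin d) (Fin d) ℝ) (hM : Mᵀ * M = 1)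
    (u : Fin d → ℂ) :
    ∑ a, Complex.normSq (((M.map Complex.ofReal) *ᵥ u) a) = ∑ a, Complex.normSq (u a) := by
  have hH : (M.map Complex.ofReal)ᴴ = Mᵀ.map Complex.ofReal := by
    ext a b; simp [Matrix.conjTranspose_apply, Matrix.map_apply]
  have hMM : Mᵀ.map Complex.ofReal * M.map Complex.ofReal = 1 := by
    rw [show (Complex.ofReal : ℝ → ℂ) = ⇑Complex.ofRealHom from rfl, ← Matrix.map_mul, hM]
    simp
  have h1 : star ((M.map Complex.ofReal) *ᵥ u) ⬝ᵥ ((M.map Complex.ofReal) *ᵥ u)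
      = star u ⬝ᵥ u := by
    rw [Matrix.star_mulVec, hH, ← Matrix.dotProduct_mulVec, Matrix.mulVec_mulVec, hMM,
      Matrix.one_mulVec]
  have h2 := h1
  simp only [dotProduct, Pi.star_apply] at h2
  have h3 : ((∑ a, Complex.normSq (((M.map Complex.ofReal) *ᵥ u) a) : ℝ) : ℂ)
      = ((∑ a, Complex.normSq (u a) : ℝ) : ℂ) := by
    rw [← sum_conj_mul_self, ← sum_conj_mul_self]; exact h2
  exact_mod_cast h3

private lemma exists_eigvec {N : Type*} [Fintype N] [DecidableEq N] (A : Matrix N N ℂ) (μ : ℂ)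
    (h : μ ∈ spectrum ℂ A) : ∃ v : N → ℂ, v ≠ 0 ∧ A *ᵥ v = μ • v := by
  rw [spectrum.mem_iff] at h
  have hdet : ((algebraMap ℂ (Matrix N N ℂ)) μ - A).det = 0 := by
    by_contra hd
    exact h ((Matrix.isUnit_iff_isUnit_det _).2 (isUnit_iff_ne_zero.2 hd))
  obtain ⟨v, hv0, hv⟩ := Matrix.exists_mulVec_eq_zero_iff.2 hdet
  refine ⟨v, hv0, ?_⟩
  rw [Matrix.sub_mulVec, Algebra.algebraMap_eq_smul_one, Matrix.smul_mulVec,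
    Matrix.one_mulVec] at hv
  exact (sub_eq_zero.mp hv).symm
/-- for a QSC graph with orthogonal edge matrices, every purely imaginary
eigenvalue of `Z` is zero. -/
theorem stmt11 (n d : ℕ) (E : Finset (Fin n × Fin n)) (hqsc : QSC n E)
    (G : Fin n → Fin n → Matrix (Fin d) (Fin d) ℝ)
    (hG : ∀ i j, (i, j) ∈ E → (G i j)ᵀ * G i j = 1) :
    ∀ μ : ℂ, μ ∈ spectrum ℂ ((Zmat n d E G).map Complex.ofReal) →
      μ.re = 0 → μ = 0 := by
  intro μ hspec hre
  classical
  obtain ⟨v, hv0, hv⟩ := exists_eigvec _ μ hspec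
  set s : Fin n → ℝ := fun i => ∑ a, Complex.normSq (v (i, a)) with hs
  obtain ⟨p0, hp0⟩ := Function.ne_iff.mp hv0
  have hp0' : v p0 ≠ 0 := by simpa using hp0
  obtain ⟨i0, -, hmax'⟩ := Finset.exists_max_image (Finset.univ : Finset (Fin n)) s
    ⟨p0.1, Finset.mem_univ _⟩
  have hmax : ∀ j, s j ≤ s i0 := fun j => hmax' j (Finset.mem_univ _)
  have hsnonneg : ∀ i, 0 ≤ s i := fun i => Finset.sum_nonneg fun a _ => Complex.normSq_nonneg _
  have hSpos : 0 < s i0 := by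
    have h1 : Complex.normSq (v p0) ≤ s p0.1 := by
      have := Finset.single_le_sum (f := fun a => Complex.normSq (v (p0.1, a)))
        (fun a _ => Complex.normSq_nonneg _) (Finset.mem_univ p0.2)
      simpa [hs] using this
    have h2 : 0 < Complex.normSq (v p0) := Complex.normSq_pos.mpr hp0'
    linarith [hmax p0.1]
  set c : ℕ := (E.filter fun e => e.1 = i0).card with hc
  set T : Finset (Fin n) := ({i0}ᶜ : Finset (Fin n)).filter (fun j => (i0, j) ∈ E) with hT
  set w : Fin n → Fin d → ℂ := fun j => ((G i0 j).map Complex.ofReal) *ᵥ (fun b => v (j, b))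
    with hw
  -- eigen-equation at block i0
  have heq : ∀ a : Fin d, (c : ℂ) * v (i0, a) - ∑ j ∈ T, w j a = μ * v (i0, a) := by
    intro a
    have h1 := congrFun hv (i0, a)
    simp only [Matrix.mulVec, dotProduct, Pi.smul_apply, smul_eq_mul] at h1
    rw [Fintype.sum_prod_type, Fintype.sum_eq_add_sum_compl i0] at h1
    have hdiag : ∑ b : Fin d, ((Zmat n d E G).map Complex.ofReal) (i0, a) (i0, b) * v (i0, b)
        = (c : ℂ) * v (i0, a) := by
      simp [Zmat, Matrix.map_apply, apply_ite, ite_mul, mul_ite, Finset.sum_ite_eq,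
        Finset.sum_ite_eq', hc]
    have hoff : ∑ j ∈ ({i0}ᶜ : Finset (Fin n)), ∑ b : Fin d,
        ((Zmat n d E G).map Complex.ofReal) (i0, a) (j, b) * v (j, b)
        = - ∑ j ∈ T, w j a := by
      rw [hT, Finset.sum_filter, ← Finset.sum_neg_distrib]
      refine Finset.sum_congr rfl fun j hj => ?_
      have hji : i0 ≠ j := by
        intro h; exact (Finset.mem_compl.mp hj) (by simp [h.symm])
      by_cases hE : (i0, j) ∈ E
      · simp only [hE, if_true]
        rw [hw]
        simp only [Matrix.mulVec, dotProduct, Matrix.map_apply, Zmat, hji,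
          if_false, hE, if_true]
        rw [← Finset.sum_neg_distrib]
        refine Finset.sum_congr rfl fun b _ => ?_
        push_cast
        ring
      · simp only [hE, if_false, neg_zero]
        refine Finset.sum_eq_zero fun b _ => ?_
        simp [Zmat, Matrix.map_apply, hji, hE]
    rw [hdiag, hoff] at h1
    rw [← h1]; ring
  set ip : Fin n → ℂ := fun j => ∑ a, (starRingEnd ℂ) (v (i0, a)) * w j a with hip
  -- inner product with v_{i0}
  have hsum : (c : ℂ) * ((s i0 : ℝ) : ℂ) - ∑ j ∈ T, ip j = μ * ((s i0 : ℝ) : ℂ) := by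
    have h1 : ∑ a, (starRingEnd ℂ) (v (i0, a)) * ((c : ℂ) * v (i0, a) - ∑ j ∈ T, w j a)
        = ∑ a, (starRingEnd ℂ) (v (i0, a)) * (μ * v (i0, a)) :=
      Finset.sum_congr rfl fun a _ => by rw [heq a]
    have hL : ∑ a, (starRingEnd ℂ) (v (i0, a)) * ((c : ℂ) * v (i0, a) - ∑ j ∈ T, w j a)
        = (c : ℂ) * ((s i0 : ℝ) : ℂ) - ∑ j ∈ T, ip j := by
      simp only [mul_sub, Finset.sum_sub_distrib]
      congr 1
      · rw [← sum_conj_mul_self (fun a => v (i0, a)), Finset.mul_sum]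
        exact Finset.sum_congr rfl fun a _ => by ring
      · simp only [Finset.mul_sum]
        rw [Finset.sum_comm]
    have hR : ∑ a, (starRingEnd ℂ) (v (i0, a)) * (μ * v (i0, a))
        = μ * ((s i0 : ℝ) : ℂ) := by
      rw [← sum_conj_mul_self (fun a => v (i0, a)), Finset.mul_sum]
      exact Finset.sum_congr rfl fun a _ => by ring
    rw [← hL, ← hR]; exact h1
  have hre2 : (c : ℝ) * s i0 - ∑ j ∈ T, (ip j).re = 0 := by
    have h := congrArg Complex.re hsum
    simp only [Complex.sub_re, Complex.mul_re, Complex.ofReal_re, Complex.ofReal_im,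
      Complex.natCast_re, Complex.natCast_im, Complex.re_sum, hre] at h
    linarith [h]
  -- norm preservation and Cauchy-Schwarz bounds
  have hQw : ∀ j ∈ T, ∑ a, Complex.normSq (w j a) = s j := by
    intro j hj
    have hE : (i0, j) ∈ E := (Finset.mem_filter.mp hj).2
    exact normSq_mulVec _ (hG i0 j hE) _
  have hdiff : ∀ j ∈ T, ∑ a, Complex.normSq (v (i0, a) - w j a)
      = s i0 + s j - 2 * (ip j).re := by
    intro j hj
    rw [normSq_sub_sum (fun a => v (i0, a)) (w j), hQw j hj]
  have hiple : ∀ j ∈ T, (ip j).re ≤ s i0 := by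
    intro j hj
    have h1 : 0 ≤ ∑ a, Complex.normSq (v (i0, a) - w j a) :=
      Finset.sum_nonneg fun a _ => Complex.normSq_nonneg _
    rw [hdiff j hj] at h1
    have := hmax j
    linarith
  have hcard : T.card ≤ c := by
    rw [hc]
    apply Finset.card_le_card_of_injOn (fun j => (i0, j))
    · intro j hj
      exact Finset.mem_filter.mpr ⟨(Finset.mem_filter.mp hj).2, rfl⟩
    · intro a _ b _ h
      exact (Prod.ext_iff.mp h).2
  have hsum_le : ∑ j ∈ T, (ip j).re ≤ (T.card : ℝ) * s i0 := by
    calc ∑ j ∈ T, (ip j).re ≤ ∑ j ∈ T, s i0 := Finset.sum_le_sum hiple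
    _ = (T.card : ℝ) * s i0 := by rw [Finset.sum_const, nsmul_eq_mul]
  have hTcS : (T.card : ℝ) * s i0 ≤ (c : ℝ) * s i0 :=
    mul_le_mul_of_nonneg_right (by exact_mod_cast hcard) (hsnonneg i0)
  have hTc : (T.card : ℝ) * s i0 = (c : ℝ) * s i0 := le_antisymm hTcS (by linarith)
  have hTeq : (T.card : ℝ) = (c : ℝ) := mul_right_cancel₀ (ne_of_gt hSpos) hTc
  have hall : ∀ j ∈ T, (ip j).re = s i0 := by
    have hz : ∑ j ∈ T, (s i0 - (ip j).re) = 0 := by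
      rw [Finset.sum_sub_distrib, Finset.sum_const, nsmul_eq_mul, hTeq]
      linarith
    intro j hj
    have h0 := (Finset.sum_eq_zero_iff_of_nonneg
      (fun j hj => by linarith [hiple j hj])).mp hz j hj
    linarith
  have hweq : ∀ j ∈ T, ∀ a, w j a = v (i0, a) := by
    intro j hj
    have h0 : ∑ a, Complex.normSq (v (i0, a) - w j a) = 0 := by
      have h1 : ∑ a, Complex.normSq (v (i0, a) - w j a) ≤ 0 := by
        rw [hdiff j hj, hall j hj]
        linarith [hmax j]
      have h2 : 0 ≤ ∑ a, Complex.normSq (v (i0, a) - w j a) :=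
        Finset.sum_nonneg fun a _ => Complex.normSq_nonneg _
      linarith
    intro a
    have h3 := (Finset.sum_eq_zero_iff_of_nonneg
      (fun a _ => Complex.normSq_nonneg (v (i0, a) - w j a))).mp h0 a (Finset.mem_univ a)
    have h4 := Complex.normSq_eq_zero.mp h3
    have := sub_eq_zero.mp h4
    exact this.symm
  -- conclude
  have hsne : s i0 ≠ 0 := ne_of_gt hSpos
  obtain ⟨a, -, ha⟩ := Finset.exists_ne_zero_of_sum_ne_zero (by simpa [hs] using hsne :
    ∑ a, Complex.normSq (v (i0, a)) ≠ 0)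
  have hva : v (i0, a) ≠ 0 := fun h => ha (by rw [h]; simp)
  have hcT : T.card = c := Nat.cast_injective hTeq
  have hfin : ∑ j ∈ T, w j a = (c : ℂ) * v (i0, a) := by
    rw [Finset.sum_congr rfl (fun j hj => hweq j hj a), Finset.sum_const, nsmul_eq_mul, hcT]
  have h5 := heq a
  rw [hfin] at h5
  have hμv : μ * v (i0, a) = 0 := by rw [← h5]; ring
  rcases mul_eq_zero.mp hμv with h | h
  · exact h
  · exact absurd h hva
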